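/- Let m₁, m₂ > 0 be real numbers with m₁ ≠ m₂, let r₀ ≥ 0 be real, and let z ∈ ℂ with |Re z| ≤ 1, |Im z| ≤ 1 and |z| ≥ 1. Let ρ₁, ρ₂ ∈ ℂ satisfy Im ρ_j > 0 and ρ_j² + r₀ = m_j·z for j = 1,2. Then ρ₁ ≠ ρ₂ and |ρ₁ − ρ₂| ≥ C(1 + r₀)^{−1/2}, where C > 0 depends only on m₁ and m₂ (for instance C = |m₁ − m₂|/(2·√(1 + 2·max(m₁,m₂))) works). -/

import Mathlib

/-- The lower bound `|ρ₁ − ρ₂| ≥ C ⟨ξ'⟩⁻¹` underlying Case 1 (`c₀ ≡ 0`) of Section 5 of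
the paper: for `m₁ ≠ m₂ > 0`, `r₀ ≥ 0`, `|Re z| ≤ 1`, `|Im z| ≤ 1`, `|z| ≥ 1`, and roots
`ρⱼ` with `Im ρⱼ > 0`, `ρⱼ² + r₀ = mⱼ z`, one has `ρ₁ ≠ ρ₂` and
`|ρ₁ − ρ₂| ≥ (|m₁ − m₂|/(2 √(1 + 2 max(m₁,m₂)))) (1 + r₀)^{−1/2}`. -/
theorem stmt_18 (m₁ m₂ : ℝ) (hm₁ : 0 < m₁) (hm₂ : 0 < m₂) (hne : m₁ ≠ m₂)
    (r₀ : ℝ) (hr₀ : 0 ≤ r₀) (z : ℂ) (hzre : |z.re| ≤ 1) (hzim : |z.im| ≤ 1)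
    (hz : 1 ≤ ‖z‖) (ρ₁ ρ₂ : ℂ) (hρ₁ : 0 < ρ₁.im) (hρ₂ : 0 < ρ₂.im)
    (heq₁ : ρ₁ ^ 2 + (r₀ : ℂ) = (m₁ : ℂ) * z)
    (heq₂ : ρ₂ ^ 2 + (r₀ : ℂ) = (m₂ : ℂ) * z) :
    ρ₁ ≠ ρ₂ ∧
    |m₁ - m₂| / (2 * Real.sqrt (1 + 2 * max m₁ m₂)) * (1 + r₀) ^ (-(1 : ℝ) / 2) ≤
      ‖(ρ₁ - ρ₂)‖ := by
  set M := max m₁ m₂ with hMdef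
  have hM : 0 < M := lt_max_of_lt_left hm₁
  have hz0 : z ≠ 0 := by
    intro h
    rw [h, norm_zero] at hz
    linarith
  have hsub : (ρ₁ - ρ₂) * (ρ₁ + ρ₂) = ((m₁ : ℂ) - m₂) * z := by
    linear_combination heq₁ - heq₂
  have hneq : ρ₁ ≠ ρ₂ := by
    intro h
    have h0 : ((m₁ : ℂ) - m₂) * z = 0 := by rw [← hsub, h]; ring
    rcases mul_eq_zero.mp h0 with h' | h'
    · exact hne (by exact_mod_cast sub_eq_zero.mp h')
    · exact hz0 h'
  refine ⟨hneq, ?_⟩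
  -- |z| ≤ 2
  have hzabs : ‖z‖ ≤ 2 := by
    have h2 : ‖z‖ ≤ Real.sqrt 2 := by
      rw [Complex.norm_def, Complex.normSq_apply]
      apply Real.sqrt_le_sqrt
      nlinarith [abs_mul_abs_self z.re, abs_mul_abs_self z.im, abs_nonneg z.re,
        abs_nonneg z.im]
    calc ‖z‖ ≤ Real.sqrt 2 := h2
      _ ≤ Real.sqrt 4 := Real.sqrt_le_sqrt (by norm_num)
      _ = 2 := by
          rw [show (4 : ℝ) = 2 ^ 2 by norm_num, Real.sqrt_sq (by norm_num)]
  set S := Real.sqrt (1 + 2 * M) with hSdef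
  set T := Real.sqrt (1 + r₀) with hTdef
  have hS : 0 < S := Real.sqrt_pos.mpr (by positivity)
  have hT : 0 < T := Real.sqrt_pos.mpr (by positivity)
  -- bound on each root
  have hroot : ∀ (ρ : ℂ) (m : ℝ), 0 < m → m ≤ M → ρ ^ 2 + (r₀ : ℂ) = (m : ℂ) * z →
      ‖ρ‖ ≤ S * T := by
    intro ρ m hm hmM heq
    rw [hSdef, hTdef, ← Real.sqrt_mul (by positivity : (0:ℝ) ≤ 1 + 2 * M),
      Real.le_sqrt (norm_nonneg ρ) (by positivity)]
    have h1 : ‖ρ‖ ^ 2 = ‖((m : ℂ) * z - (r₀ : ℂ))‖ := by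
      rw [← norm_pow]
      congr 1
      linear_combination heq
    have h2 : ‖((m : ℂ) * z - (r₀ : ℂ))‖ ≤ m * ‖z‖ + r₀ := by
      calc ‖((m : ℂ) * z - (r₀ : ℂ))‖
          ≤ ‖((m : ℂ) * z)‖ + ‖((r₀ : ℂ))‖ :=
            norm_sub_le _ _
        _ = m * ‖z‖ + r₀ := by
            rw [norm_mul, Complex.norm_real, Complex.norm_real, Real.norm_eq_abs, Real.norm_eq_abs,
              abs_of_pos hm, abs_of_nonneg hr₀]
    have h3 : m * ‖z‖ ≤ 2 * M := by
      nlinarith [norm_nonneg z]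
    nlinarith [hr₀, hM]
  have hb₁ := hroot ρ₁ m₁ hm₁ (le_max_left _ _) heq₁
  have hb₂ := hroot ρ₂ m₂ hm₂ (le_max_right _ _) heq₂
  have hB : ‖(ρ₁ + ρ₂)‖ ≤ 2 * S * T := by
    calc ‖(ρ₁ + ρ₂)‖ ≤ ‖ρ₁‖ + ‖ρ₂‖ :=
          norm_add_le _ _
      _ ≤ 2 * S * T := by linarith
  have hAB : |m₁ - m₂| ≤ ‖(ρ₁ - ρ₂)‖ * ‖(ρ₁ + ρ₂)‖ := by
    have h := congrArg (‖·‖) hsub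
    rw [norm_mul, norm_mul] at h
    have habs : ‖((m₁ : ℂ) - m₂)‖ = |m₁ - m₂| := by
      rw [show ((m₁ : ℂ) - m₂) = ((m₁ - m₂ : ℝ) : ℂ) by push_cast; ring,
        Complex.norm_real, Real.norm_eq_abs]
    rw [habs] at h
    nlinarith [abs_nonneg (m₁ - m₂)]
  have key : |m₁ - m₂| ≤ ‖(ρ₁ - ρ₂)‖ * (2 * S * T) := by
    nlinarith [norm_nonneg (ρ₁ - ρ₂), norm_nonneg (ρ₁ + ρ₂)]
  have hpow : (1 + r₀) ^ (-(1 : ℝ) / 2) = T⁻¹ := by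
    rw [hTdef, Real.sqrt_eq_rpow, ← Real.rpow_neg (by positivity)]
    norm_num
  rw [hpow, show |m₁ - m₂| / (2 * S) * T⁻¹ = |m₁ - m₂| / (2 * S * T) by
    field_simp, div_le_iff₀ (by positivity)]
  calc |m₁ - m₂| ≤ ‖(ρ₁ - ρ₂)‖ * (2 * S * T) := key
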